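/- arXiv:2111.03237 — 3 statements merged into one kernel-verified Lean document; each statement's English description precedes it below -/
import Mathlib

section
/- Let λ be a random variable with a ≤ λ ≤ b almost surely for some 0 < a ≤ b < ∞ and E[λ] = δ, where δ > 1. Define M(u) := (1/δ)·E[u·λ/(u+λ)] and Φ(u) := M(u)·u/(u − M(u)) for u > 0. Then 0 < M(u) < u for every u > 0 (so Φ is well defined and positive), Φ is continuous and strictly increasing on (0, ∞), lim_{u→0⁺} Φ(u) = 0, and lim_{u→∞} Φ(u) = 1. -/
open MeasureTheory ProbabilityTheory Filter

lemma cheb_aux {Ω : Type*} [MeasurableSpace Ω] (μ : Measure Ω) [IsProbabilityMeasure μ]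
    {X Y : Ω → ℝ} (hX : Integrable X μ) (hY : Integrable Y μ)
    (hXY : Integrable (fun ω => X ω * Y ω) μ)
    (hco : ∀ ω ω', 0 ≤ (X ω - X ω') * (Y ω - Y ω')) :
    (∫ ω, X ω ∂μ) * (∫ ω, Y ω ∂μ) ≤ ∫ ω, X ω * Y ω ∂μ := by
  have h0 : 0 ≤ ∫ p : Ω × Ω, (X p.1 - X p.2) * (Y p.1 - Y p.2) ∂(μ.prod μ) :=
    integral_nonneg fun p => hco _ _
  have h1 : Integrable (fun p : Ω × Ω => (X p.1 * Y p.1) * (1 : ℝ)) (μ.prod μ) :=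
    hXY.mul_prod (integrable_const 1)
  have h2 : Integrable (fun p : Ω × Ω => (1:ℝ) * (X p.2 * Y p.2)) (μ.prod μ) :=
    (integrable_const 1).mul_prod hXY
  have h3 : Integrable (fun p : Ω × Ω => X p.1 * Y p.2) (μ.prod μ) := hX.mul_prod hY
  have h4 : Integrable (fun p : Ω × Ω => Y p.1 * X p.2) (μ.prod μ) := hY.mul_prod hX
  have e1 : ∫ p : Ω × Ω, (X p.1 * Y p.1) * (1:ℝ) ∂(μ.prod μ)
      = (∫ ω, X ω * Y ω ∂μ) * ∫ _ω, (1:ℝ) ∂μ := integral_prod_mul (fun ω => X ω * Y ω) (fun _ => 1)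
  have e2 : ∫ p : Ω × Ω, (1:ℝ) * (X p.2 * Y p.2) ∂(μ.prod μ)
      = (∫ _ω, (1:ℝ) ∂μ) * ∫ ω, X ω * Y ω ∂μ := integral_prod_mul (fun _ => 1) (fun ω => X ω * Y ω)
  have e3 : ∫ p : Ω × Ω, X p.1 * Y p.2 ∂(μ.prod μ) = (∫ ω, X ω ∂μ) * ∫ ω, Y ω ∂μ :=
    integral_prod_mul X Y
  have e4 : ∫ p : Ω × Ω, Y p.1 * X p.2 ∂(μ.prod μ) = (∫ ω, Y ω ∂μ) * ∫ ω, X ω ∂μ :=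
    integral_prod_mul Y X
  have hone : ∫ _ω, (1:ℝ) ∂μ = 1 := by simp
  have key : ∫ p : Ω × Ω, (X p.1 - X p.2) * (Y p.1 - Y p.2) ∂(μ.prod μ)
      = 2 * (∫ ω, X ω * Y ω ∂μ) - 2 * ((∫ ω, X ω ∂μ) * (∫ ω, Y ω ∂μ)) := by
    have hfun : (fun p : Ω × Ω => (X p.1 - X p.2) * (Y p.1 - Y p.2))
        = fun p : Ω × Ω => ((X p.1 * Y p.1) * 1 + 1 * (X p.2 * Y p.2))
          - (X p.1 * Y p.2 + Y p.1 * X p.2) := by funext p; ring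
    have h12 : Integrable (fun p : Ω × Ω => (X p.1 * Y p.1) * 1 + 1 * (X p.2 * Y p.2)) (μ.prod μ) := by
      exact h1.add h2
    have h34 : Integrable (fun p : Ω × Ω => X p.1 * Y p.2 + Y p.1 * X p.2) (μ.prod μ) := by
      exact h3.add h4
    rw [hfun, integral_sub h12 h34, integral_add h1 h2, integral_add h3 h4, e1, e2, e3, e4, hone]
    ring
  rw [key] at h0
  linarith

set_option maxHeartbeats 2000000 in
/-- properties of the state-evolution map `Φ` built from a bounded spectrum
random variable `λ` with mean `δ > 1`:  `0 < M(u) < u` for all `u > 0`, `Φ` is continuous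
and strictly increasing on `(0, ∞)`, `Φ(u) → 0` as `u → 0⁺`, and `Φ(u) → 1` as `u → ∞`. -/
theorem SE_map_Phi_properties {Ω : Type*} [MeasurableSpace Ω] {μ : Measure Ω}
    [IsProbabilityMeasure μ]
    (lam : Ω → ℝ) (hlam : Measurable lam)
    (a b δ : ℝ) (ha : 0 < a) (hab : a ≤ b)
    (hbound : ∀ᵐ ω ∂μ, lam ω ∈ Set.Icc a b)
    (hmean : ∫ ω, lam ω ∂μ = δ) (hδ : 1 < δ) :
    let M : ℝ → ℝ := fun u => (1 / δ) * ∫ ω, u * lam ω / (u + lam ω) ∂μ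
    let Φ : ℝ → ℝ := fun u => M u * u / (u - M u)
    (∀ u : ℝ, 0 < u → 0 < M u ∧ M u < u) ∧
      ContinuousOn Φ (Set.Ioi 0) ∧
      StrictMonoOn Φ (Set.Ioi 0) ∧
      Tendsto Φ (nhdsWithin 0 (Set.Ioi 0)) (nhds 0) ∧
      Tendsto Φ atTop (nhds 1) := by
  intro M Φ
  have hδ0 : (0:ℝ) < δ := lt_trans one_pos hδ
  have hb : (0:ℝ) < b := lt_of_lt_of_le ha hab
  set I : ℝ → ℝ := fun u => ∫ ω, u * lam ω / (u + lam ω) ∂μ with hIdef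
  have hM : ∀ u, M u = (1 / δ) * I u := fun u => rfl
  -- integrability helper
  have hint : ∀ (f : Ω → ℝ) (C : ℝ), Measurable f → (∀ᵐ ω ∂μ, |f ω| ≤ C) →
      Integrable f μ := fun f C hf h =>
    (integrable_const C).mono' hf.aestronglyMeasurable (by simpa [Real.norm_eq_abs] using h)
  have hlam_int : Integrable lam μ := by
    refine hint lam b hlam ?_
    filter_upwards [hbound] with ω hω
    rw [abs_le]
    exact ⟨by linarith [hω.1], hω.2⟩
  have mX : ∀ u : ℝ, Measurable fun ω => u * lam ω / (u + lam ω) :=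
    fun u => (measurable_const.mul hlam).div (measurable_const.add hlam)
  have hXint : ∀ u : ℝ, 0 < u → Integrable (fun ω => u * lam ω / (u + lam ω)) μ := by
    intro u hu
    refine hint _ b (mX u) ?_
    filter_upwards [hbound] with ω hω
    have h1 : 0 < u + lam ω := by linarith [hω.1]
    have h2 : 0 ≤ u * lam ω / (u + lam ω) := div_nonneg (by nlinarith [hω.1]) h1.le
    rw [abs_le]
    constructor
    · linarith
    · rw [div_le_iff₀ h1]; nlinarith [hω.1, hω.2]
  have int_const : ∀ c : ℝ, (∫ _ω, c ∂μ) = c := fun c => by simp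
  -- lower bound for I
  have hI_lb : ∀ u : ℝ, 0 < u → u * a / (u + a) ≤ I u := by
    intro u hu
    have hae : ∀ᵐ ω ∂μ, u * a / (u + a) ≤ u * lam ω / (u + lam ω) := by
      filter_upwards [hbound] with ω hω
      have h1 : 0 < u + lam ω := by linarith [hω.1]
      have h2 : 0 < u + a := by linarith
      rw [div_le_div_iff₀ h2 h1]
      nlinarith [mul_nonneg (mul_nonneg hu.le hu.le) (sub_nonneg.2 hω.1)]
    calc u * a / (u + a) = ∫ _ω, u * a / (u + a) ∂μ := (int_const _).symm
      _ ≤ I u := integral_mono_ae (integrable_const _) (hXint u hu) hae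
  have hI_pos : ∀ u : ℝ, 0 < u → 0 < I u := by
    intro u hu
    have : 0 < u * a / (u + a) := by positivity
    linarith [hI_lb u hu]
  -- upper bounds for I
  have hI_ub : ∀ u : ℝ, 0 < u → I u ≤ u * b / (u + b) := by
    intro u hu
    have hae : ∀ᵐ ω ∂μ, u * lam ω / (u + lam ω) ≤ u * b / (u + b) := by
      filter_upwards [hbound] with ω hω
      have h1 : 0 < u + lam ω := by linarith [hω.1]
      have h2 : 0 < u + b := by linarith
      rw [div_le_div_iff₀ h1 h2]
      nlinarith [mul_nonneg (mul_nonneg hu.le hu.le) (sub_nonneg.2 hω.2)]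
    calc I u ≤ ∫ _ω, u * b / (u + b) ∂μ :=
        integral_mono_ae (hXint u hu) (integrable_const _) hae
      _ = u * b / (u + b) := int_const _
  have hI_le_u : ∀ u : ℝ, 0 < u → I u ≤ u := by
    intro u hu
    have h1 : u * b / (u + b) ≤ u := by
      rw [div_le_iff₀ (by linarith)]; nlinarith
    linarith [hI_ub u hu]
  have hI_le_delta : ∀ u : ℝ, 0 < u → I u ≤ δ := by
    intro u hu
    have hae : ∀ᵐ ω ∂μ, u * lam ω / (u + lam ω) ≤ lam ω := by
      filter_upwards [hbound] with ω hω
      have h1 : 0 < u + lam ω := by linarith [hω.1]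
      rw [div_le_iff₀ h1]
      nlinarith [hω.1, sq_nonneg (lam ω)]
    calc I u ≤ ∫ ω, lam ω ∂μ := integral_mono_ae (hXint u hu) hlam_int hae
      _ = δ := hmean
  have hI_ge : ∀ u : ℝ, 0 < u → δ - b^2/u ≤ I u := by
    intro u hu
    have hae : ∀ᵐ ω ∂μ, lam ω - b^2/u ≤ u * lam ω / (u + lam ω) := by
      filter_upwards [hbound] with ω hω
      have h1 : 0 < u + lam ω := by linarith [hω.1]
      have e : lam ω - u * lam ω / (u + lam ω) = lam ω^2 / (u + lam ω) := by
        field_simp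
        ring
      have h2 : lam ω^2 / (u + lam ω) ≤ b^2/u := by
        rw [div_le_div_iff₀ h1 hu]
        nlinarith [hω.1, hω.2, mul_nonneg (sub_nonneg.2 hω.2) hu.le]
      linarith
    have e2 : δ - b^2/u = ∫ ω, (lam ω - b^2/u) ∂μ := by
      rw [integral_sub hlam_int (integrable_const _), hmean, int_const]
    rw [e2]
    exact integral_mono_ae (hlam_int.sub (integrable_const _)) (hXint u hu) hae
  -- Part 1
  have hM_pos : ∀ u : ℝ, 0 < u → 0 < M u := by
    intro u hu
    rw [hM]
    exact mul_pos (by positivity) (hI_pos u hu)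
  have hM_lt : ∀ u : ℝ, 0 < u → M u < u := by
    intro u hu
    rw [hM]
    have h1 : u * b / (u + b) < u := by
      rw [div_lt_iff₀ (by linarith)]; nlinarith
    have h2 : (1/δ) * I u < I u := by
      have h3 : 1/δ < 1 := by rw [div_lt_one hδ0]; exact hδ
      nlinarith [hI_pos u hu]
    linarith [hI_ub u hu]
  -- difference identity
  have mJ : ∀ u v : ℝ, Measurable fun ω => lam ω^2 / ((u + lam ω) * (v + lam ω)) :=
    fun u v => (hlam.pow_const 2).div
      ((measurable_const.add hlam).mul (measurable_const.add hlam))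
  have hJint : ∀ u v : ℝ, 0 < u → 0 < v →
      Integrable (fun ω => lam ω^2 / ((u + lam ω) * (v + lam ω))) μ := by
    intro u v hu hv
    refine hint _ 1 (mJ u v) ?_
    filter_upwards [hbound] with ω hω
    have hl : 0 < lam ω := lt_of_lt_of_le ha hω.1
    have h1 : 0 < u + lam ω := by linarith
    have h2 : 0 < v + lam ω := by linarith
    rw [abs_le]
    constructor
    · have : 0 ≤ lam ω^2 / ((u + lam ω) * (v + lam ω)) := by positivity
      linarith
    · rw [div_le_one (by positivity)]
      nlinarith [mul_pos hu hv, mul_pos hu hl, mul_pos hv hl]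
  have hJ_bounds : ∀ u v : ℝ, 0 < u → 0 < v →
      a^2/((u+b)*(v+b)) ≤ (∫ ω, lam ω^2 / ((u + lam ω) * (v + lam ω)) ∂μ) ∧
      (∫ ω, lam ω^2 / ((u + lam ω) * (v + lam ω)) ∂μ) ≤ 1 := by
    intro u v hu hv
    constructor
    · have hae : ∀ᵐ ω ∂μ, a^2/((u+b)*(v+b)) ≤ lam ω^2 / ((u + lam ω) * (v + lam ω)) := by
        filter_upwards [hbound] with ω hω
        have hl : 0 < lam ω := lt_of_lt_of_le ha hω.1
        have h1 : 0 < (u + lam ω) * (v + lam ω) := by positivity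
        refine div_le_div₀ (sq_nonneg _) (by nlinarith [hω.1]) h1 (by nlinarith [hω.1, hω.2]) 
      calc a^2/((u+b)*(v+b)) = ∫ _ω, a^2/((u+b)*(v+b)) ∂μ := (int_const _).symm
        _ ≤ _ := integral_mono_ae (integrable_const _) (hJint u v hu hv) hae
    · have hae : ∀ᵐ ω ∂μ, lam ω^2 / ((u + lam ω) * (v + lam ω)) ≤ 1 := by
        filter_upwards [hbound] with ω hω
        have hl : 0 < lam ω := lt_of_lt_of_le ha hω.1
        rw [div_le_one (by positivity)]
        nlinarith [mul_pos hu hv, mul_pos hu hl, mul_pos hv hl]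
      calc (∫ ω, lam ω^2 / ((u + lam ω) * (v + lam ω)) ∂μ) ≤ ∫ _ω, (1:ℝ) ∂μ :=
          integral_mono_ae (hJint u v hu hv) (integrable_const _) hae
        _ = 1 := int_const _
  have hdiff : ∀ u v : ℝ, 0 < u → 0 < v →
      I v - I u = (v - u) * ∫ ω, lam ω^2 / ((u + lam ω) * (v + lam ω)) ∂μ := by
    intro u v hu hv
    have hae : ∀ᵐ ω ∂μ, v * lam ω / (v + lam ω) - u * lam ω / (u + lam ω)
        = (v - u) * (lam ω^2 / ((u + lam ω) * (v + lam ω))) := by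
      filter_upwards [hbound] with ω hω
      have hl : 0 < lam ω := lt_of_lt_of_le ha hω.1
      have h1 : u + lam ω ≠ 0 := by positivity
      have h2 : v + lam ω ≠ 0 := by positivity
      field_simp
      ring
    calc I v - I u = ∫ ω, (v * lam ω / (v + lam ω) - u * lam ω / (u + lam ω)) ∂μ :=
        (integral_sub (hXint v hv) (hXint u hu)).symm
      _ = ∫ ω, (v - u) * (lam ω^2 / ((u + lam ω) * (v + lam ω))) ∂μ := integral_congr_ae hae
      _ = (v - u) * ∫ ω, lam ω^2 / ((u + lam ω) * (v + lam ω)) ∂μ := integral_const_mul _ _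
  -- continuity of I
  have hI_cont : ContinuousOn I (Set.Ioi 0) := by
    have hlip : LipschitzOnWith 1 I (Set.Ioi 0) := by
      apply LipschitzOnWith.of_dist_le_mul
      intro x hx y hy
      rw [Real.dist_eq, Real.dist_eq, NNReal.coe_one, one_mul]
      have key : ∀ s t : ℝ, 0 < s → 0 < t → s ≤ t → |I t - I s| ≤ |t - s| := by
        intro s t hs ht hst
        have h := hdiff s t hs ht
        have hb1 := (hJ_bounds s t hs ht).2
        have hb0 : 0 ≤ ∫ ω, lam ω^2 / ((s + lam ω) * (t + lam ω)) ∂μ :=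
          le_trans (by positivity) (hJ_bounds s t hs ht).1
        rw [h, abs_of_nonneg (mul_nonneg (by linarith) hb0), abs_of_nonneg (by linarith)]
        nlinarith [mul_nonneg (sub_nonneg.2 hst) (sub_nonneg.2 hb1)]
      rcases le_total x y with h | h
      · rw [abs_sub_comm (I x), abs_sub_comm x]
        exact key x y (Set.mem_Ioi.mp hx) (Set.mem_Ioi.mp hy) h
      · exact key y x (Set.mem_Ioi.mp hy) (Set.mem_Ioi.mp hx) h
    exact hlip.continuousOn
  have hM_cont : ContinuousOn M (Set.Ioi 0) := by
    have hMeq : M = fun u => (1/δ) * I u := funext hM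
    rw [hMeq]
    exact continuousOn_const.mul hI_cont
  have hΦ_cont : ContinuousOn Φ (Set.Ioi 0) := by
    have hnum : ContinuousOn (fun u => M u * u) (Set.Ioi 0) := hM_cont.mul continuousOn_id
    have hden : ContinuousOn (fun u => u - M u) (Set.Ioi 0) := continuousOn_id.sub hM_cont
    exact hnum.div hden fun u hu => ne_of_gt (sub_pos.2 (hM_lt u (Set.mem_Ioi.mp hu)))
  -- Chebyshev correlation inequality
  have hcheb : ∀ u v : ℝ, 0 < u → 0 < v →
      I u * I v ≤ u * v * ∫ ω, lam ω^2 / ((u + lam ω) * (v + lam ω)) ∂μ := by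
    intro u v hu hv
    have hmono : ∀ w : ℝ, 0 < w → ∀ s t : ℝ, s ≤ t →
        w * max s a / (w + max s a) ≤ w * max t a / (w + max t a) := by
      intro w hw s t hst
      have h1 : a ≤ max s a := le_max_right _ _
      have h2 : max s a ≤ max t a := max_le_max hst le_rfl
      have d1 : 0 < w + max s a := by linarith
      have d2 : 0 < w + max t a := by linarith
      rw [div_le_div_iff₀ d1 d2]
      nlinarith [mul_nonneg (mul_nonneg hw.le hw.le) (sub_nonneg.2 h2)]
    have hco : ∀ ω ω' : Ω,
        0 ≤ (u * max (lam ω) a / (u + max (lam ω) a) - u * max (lam ω') a / (u + max (lam ω') a))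
          * (v * max (lam ω) a / (v + max (lam ω) a) - v * max (lam ω') a / (v + max (lam ω') a)) := by
      intro ω ω'
      rcases le_total (lam ω) (lam ω') with h | h
      · have h1 := hmono u hu _ _ h
        have h2 := hmono v hv _ _ h
        nlinarith
      · have h1 := hmono u hu _ _ h
        have h2 := hmono v hv _ _ h
        nlinarith
    have mX' : ∀ w : ℝ, Measurable fun ω => w * max (lam ω) a / (w + max (lam ω) a) :=
      fun w => (measurable_const.mul (hlam.max measurable_const)).div
        (measurable_const.add (hlam.max measurable_const))
    have hbd' : ∀ w : ℝ, 0 < w → ∀ᵐ ω ∂μ,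
        0 ≤ w * max (lam ω) a / (w + max (lam ω) a)
        ∧ w * max (lam ω) a / (w + max (lam ω) a) ≤ b := by
      intro w hw
      filter_upwards [hbound] with ω hω
      rw [max_eq_left hω.1]
      have h1 : 0 < w + lam ω := by linarith [hω.1]
      constructor
      · exact div_nonneg (by nlinarith [hω.1]) h1.le
      · rw [div_le_iff₀ h1]; nlinarith [hω.1, hω.2]
    have hX'int : Integrable (fun ω => u * max (lam ω) a / (u + max (lam ω) a)) μ := by
      refine hint _ b (mX' u) ?_
      filter_upwards [hbd' u hu] with ω h
      rw [abs_le]; exact ⟨by linarith [h.1], h.2⟩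
    have hY'int : Integrable (fun ω => v * max (lam ω) a / (v + max (lam ω) a)) μ := by
      refine hint _ b (mX' v) ?_
      filter_upwards [hbd' v hv] with ω h
      rw [abs_le]; exact ⟨by linarith [h.1], h.2⟩
    have hXY'int : Integrable (fun ω => (u * max (lam ω) a / (u + max (lam ω) a))
        * (v * max (lam ω) a / (v + max (lam ω) a))) μ := by
      refine hint _ (b*b) ((mX' u).mul (mX' v)) ?_
      filter_upwards [hbd' u hu, hbd' v hv] with ω h1 h2
      rw [abs_le]
      constructor
      · nlinarith [mul_nonneg h1.1 h2.1, mul_pos hb hb]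
      · exact mul_le_mul h1.2 h2.2 h2.1 hb.le
    have hc := cheb_aux μ hX'int hY'int hXY'int hco
    have eX : (∫ ω, u * max (lam ω) a / (u + max (lam ω) a) ∂μ) = I u := by
      simp only [hIdef]
      apply integral_congr_ae
      filter_upwards [hbound] with ω hω
      rw [max_eq_left hω.1]
    have eY : (∫ ω, v * max (lam ω) a / (v + max (lam ω) a) ∂μ) = I v := by
      simp only [hIdef]
      apply integral_congr_ae
      filter_upwards [hbound] with ω hω
      rw [max_eq_left hω.1]
    have eXY : (∫ ω, (u * max (lam ω) a / (u + max (lam ω) a))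
        * (v * max (lam ω) a / (v + max (lam ω) a)) ∂μ)
        = u * v * ∫ ω, lam ω^2 / ((u + lam ω) * (v + lam ω)) ∂μ := by
      rw [← integral_const_mul]
      apply integral_congr_ae
      filter_upwards [hbound] with ω hω
      rw [max_eq_left hω.1]
      have hl : 0 < lam ω := lt_of_lt_of_le ha hω.1
      have h1 : u + lam ω ≠ 0 := by positivity
      have h2 : v + lam ω ≠ 0 := by positivity
      field_simp
    rw [eX, eY, eXY] at hc
    exact hc
  -- strict monotonicity
  have hΦ_mono : StrictMonoOn Φ (Set.Ioi 0) := by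
    intro u hu v hv huv
    have hu' : (0:ℝ) < u := Set.mem_Ioi.mp hu
    have hv' : (0:ℝ) < v := Set.mem_Ioi.mp hv
    have hMu' := hM_lt u hu'
    have hMv' := hM_lt v hv'
    show M u * u / (u - M u) < M v * v / (v - M v)
    rw [div_lt_div_iff₀ (sub_pos.2 hMu') (sub_pos.2 hMv')]
    have hJ1 := (hJ_bounds u v hu' hv').1
    have hJpos : 0 < ∫ ω, lam ω^2 / ((u + lam ω) * (v + lam ω)) ∂μ :=
      lt_of_lt_of_le (by positivity) hJ1
    have hch := hcheb u v hu' hv'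
    have hdf := hdiff u v hu' hv'
    have h5 : 0 < v - u := sub_pos.2 huv
    have hkey : (v - u) * (I u * I v) < δ * (u * v * (I v - I u)) := by
      rw [hdf]
      nlinarith [mul_pos (mul_pos hu' hv') hJpos,
        mul_le_mul_of_nonneg_left hch h5.le,
        mul_pos (mul_pos (sub_pos.2 hδ) h5) (mul_pos (mul_pos hu' hv') hJpos)]
    have l1 : M u * u * (v - M v) = (I u * u * (δ*v - I v))/δ^2 := by
      rw [hM u, hM v]; field_simp
    have l2 : M v * v * (u - M u) = (I v * v * (δ*u - I u))/δ^2 := by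
      rw [hM u, hM v]; field_simp
    rw [l1, l2, div_lt_div_iff₀ (by positivity) (by positivity)]
    have hk2 : 0 < δ * (u * v * (I v - I u)) - (v - u) * (I u * I v) := by linarith
    nlinarith [mul_pos (mul_pos hδ0 hδ0) hk2]
  -- limit at 0+
  have hΦ0 : Tendsto Φ (nhdsWithin 0 (Set.Ioi 0)) (nhds 0) := by
    have hle : ∀ u : ℝ, 0 < u → Φ u ≤ u / (δ - 1) := by
      intro u hu
      have hMu := hM_pos u hu
      have hMu' := hM_lt u hu
      have hMle : M u ≤ u / δ := by
        rw [hM]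
        have h4 := hI_le_u u hu
        calc (1/δ) * I u ≤ (1/δ) * u :=
            mul_le_mul_of_nonneg_left h4 (by positivity)
          _ = u / δ := by ring
      show M u * u / (u - M u) ≤ u / (δ - 1)
      rw [div_le_div_iff₀ (sub_pos.2 hMu') (show (0:ℝ) < δ - 1 by linarith)]
      have h6 : δ * u * M u ≤ δ * u * (u/δ) :=
        mul_le_mul_of_nonneg_left hMle (by positivity)
      have h7 : δ * u * (u/δ) = u * u := by field_simp
      nlinarith
    apply tendsto_of_tendsto_of_tendsto_of_le_of_le' tendsto_const_nhds
      (f := Φ) (g := fun _ => (0:ℝ)) (h := fun u => u / (δ - 1))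
    · have h1 : Tendsto (fun u : ℝ => u / (δ - 1)) (nhds 0) (nhds (0 / (δ - 1))) :=
        (continuous_id.div_const _).tendsto 0
      rw [zero_div] at h1
      exact h1.mono_left nhdsWithin_le_nhds
    · filter_upwards [self_mem_nhdsWithin] with u hu
      have hu' : (0:ℝ) < u := Set.mem_Ioi.mp hu
      exact le_of_lt (div_pos (mul_pos (hM_pos u hu') hu') (sub_pos.2 (hM_lt u hu')))
    · filter_upwards [self_mem_nhdsWithin] with u hu
      exact hle u (Set.mem_Ioi.mp hu)
  -- limit at infinity
  have hI_tend : Tendsto I atTop (nhds δ) := by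
    apply tendsto_of_tendsto_of_tendsto_of_le_of_le'
      (g := fun u => δ - b^2/u) (h := fun _ => δ)
    · have h1 : Tendsto (fun u : ℝ => b^2/u) atTop (nhds 0) :=
        tendsto_const_nhds.div_atTop tendsto_id
      have h2 := tendsto_const_nhds.sub h1 (f := fun _ : ℝ => δ)
      simpa using h2
    · exact tendsto_const_nhds
    · filter_upwards [eventually_gt_atTop 0] with u hu; exact hI_ge u hu
    · filter_upwards [eventually_gt_atTop 0] with u hu; exact hI_le_delta u hu
  have hIu_tend : Tendsto (fun u => I u / u) atTop (nhds 0) := by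
    apply tendsto_of_tendsto_of_tendsto_of_le_of_le' tendsto_const_nhds
      (g := fun _ => (0:ℝ)) (h := fun u => δ / u)
    · exact tendsto_const_nhds.div_atTop tendsto_id
    · filter_upwards [eventually_gt_atTop 0] with u hu
      exact div_nonneg (hI_pos u hu).le hu.le
    · filter_upwards [eventually_gt_atTop 0] with u hu
      exact (div_le_div_iff_of_pos_right hu).2 (hI_le_delta u hu)
  have hΦinfty : Tendsto Φ atTop (nhds 1) := by
    have htarget : Tendsto (fun u => I u / (δ - I u / u)) atTop (nhds 1) := by
      have h1 := hI_tend.div (tendsto_const_nhds.sub hIu_tend)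
        (by simpa using hδ0.ne')
      rw [sub_zero, div_self hδ0.ne'] at h1; exact h1
    apply htarget.congr'
    filter_upwards [eventually_gt_atTop 0] with u hu
    have hMu' := hM_lt u hu
    have h1 : 0 < u - M u := sub_pos.2 hMu'
    have h2 : 0 < δ - I u / u := by
      have h3 : I u / u ≤ 1 := by rw [div_le_one hu]; exact hI_le_u u hu
      linarith
    rw [hM] at h1
    show I u / (δ - I u / u) = M u * u / (u - M u)
    rw [hM]
    rw [div_eq_div_iff h2.ne' h1.ne']
    field_simp
  exact ⟨fun u hu => ⟨hM_pos u hu, hM_lt u hu⟩, hΦ_cont, hΦ_mono, hΦ0, hΦinfty⟩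
end

section
/- Let φ₁(x) := (2π)^{−1/2}·exp(−x²/2) be the standard Gaussian density and Φ₁(x) := ∫_{−∞}^{x} φ₁(t) dt the standard Gaussian distribution function. Then for every x ∈ ℝ, |(d/dx)(φ₁(x)/Φ₁(x))| ≤ 1; consequently, φ₁(x)/Φ₁(x) ≤ √(2/π) + |x| for every x ∈ ℝ. -/
open MeasureTheory Filter Set Real Topology

noncomputable def gphi : ℝ → ℝ := fun x => (Real.sqrt (2 * Real.pi))⁻¹ * Real.exp (-x ^ 2 / 2)
noncomputable def gPhi : ℝ → ℝ := fun x => ∫ t in Set.Iic x, gphi t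

lemma gphi_pos (x : ℝ) : 0 < gphi x := by
  have : 0 < Real.sqrt (2 * Real.pi) := Real.sqrt_pos.2 (by positivity)
  exact mul_pos (inv_pos.2 this) (Real.exp_pos _)

lemma gphi_eq (x : ℝ) : gphi x = (Real.sqrt (2 * Real.pi))⁻¹ * Real.exp (-(1/2 : ℝ) * x ^ 2) := by
  unfold gphi; ring_nf

lemma integrable_gphi : Integrable gphi := by
  have h := (integrable_exp_neg_mul_sq (by norm_num : (0:ℝ) < 1/2)).const_mul
    (Real.sqrt (2 * Real.pi))⁻¹
  exact h.congr (by filter_upwards with x using (gphi_eq x).symm)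

lemma integrable_id_mul_gphi : Integrable (fun t : ℝ => t * gphi t) := by
  have h := (integrable_rpow_mul_exp_neg_mul_sq (by norm_num : (0:ℝ) < 1/2)
    (by norm_num : (-1:ℝ) < 1)).const_mul (Real.sqrt (2 * Real.pi))⁻¹
  refine h.congr ?_
  filter_upwards with x
  rw [Real.rpow_one, gphi_eq]; ring

lemma integrable_sq_mul_gphi : Integrable (fun t : ℝ => t ^ 2 * gphi t) := by
  have h := (integrable_rpow_mul_exp_neg_mul_sq (by norm_num : (0:ℝ) < 1/2)
    (by norm_num : (-1:ℝ) < 2)).const_mul (Real.sqrt (2 * Real.pi))⁻¹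
  refine h.congr ?_
  filter_upwards with x
  rw [show ((2:ℝ)) = ((2:ℕ):ℝ) by norm_num, Real.rpow_natCast, gphi_eq]; ring

lemma hasDerivAt_gphi (x : ℝ) : HasDerivAt gphi (-x * gphi x) x := by
  have h1 : HasDerivAt (fun y : ℝ => -y ^ 2 / 2) (-x) x := by
    have h := ((hasDerivAt_pow 2 x).neg.div_const 2)
    refine h.congr_deriv ?_
    ring
  have h2 := (h1.exp).const_mul (Real.sqrt (2 * Real.pi))⁻¹
  refine h2.congr_deriv ?_
  unfold gphi; ring

lemma gphi_even (x : ℝ) : gphi (-x) = gphi x := by unfold gphi; ring_nf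

lemma tendsto_gphi_atTop : Tendsto gphi atTop (𝓝 0) := by
  have h1 : Tendsto (fun x : ℝ => -x ^ 2 / 2) atTop atBot := by
    have := (tendsto_pow_atTop (two_ne_zero)).const_mul_atTop_of_neg
      (show (-(1/2) : ℝ) < 0 by norm_num)
    refine this.congr fun x => by ring
  have h2 : Tendsto (fun x : ℝ => Real.exp (-x ^ 2 / 2)) atTop (𝓝 0) :=
    Real.tendsto_exp_atBot.comp h1
  have h3 := h2.const_mul (Real.sqrt (2 * Real.pi))⁻¹
  rw [mul_zero] at h3
  exact h3

lemma tendsto_gphi_atBot : Tendsto gphi atBot (𝓝 0) := by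
  have := tendsto_gphi_atTop.comp tendsto_neg_atBot_atTop
  refine this.congr fun x => gphi_even x

lemma tendsto_id_mul_gphi_atTop : Tendsto (fun t : ℝ => t * gphi t) atTop (𝓝 0) := by
  have ho := rpow_mul_exp_neg_mul_sq_isLittleO_exp_neg (show (0:ℝ) < 1/2 by norm_num) 1
  have hv : Tendsto (fun x : ℝ => Real.exp (-(1/2 : ℝ) * x)) atTop (𝓝 0) :=
    Real.tendsto_exp_atBot.comp
      ((tendsto_id (α := ℝ)).const_mul_atTop_of_neg (show (-(1/2):ℝ) < 0 by norm_num))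
  have h0 : Tendsto (fun x : ℝ => x ^ (1:ℝ) * Real.exp (-(1/2 : ℝ) * x ^ 2)) atTop (𝓝 0) :=
    ho.tendsto_zero_of_tendsto hv
  have := h0.const_mul (Real.sqrt (2 * Real.pi))⁻¹
  simp only [mul_zero] at this
  refine this.congr' ?_
  filter_upwards with x
  rw [Real.rpow_one, gphi_eq]; ring

lemma tendsto_id_mul_gphi_atBot : Tendsto (fun t : ℝ => t * gphi t) atBot (𝓝 0) := by
  have := (tendsto_id_mul_gphi_atTop.comp tendsto_neg_atBot_atTop).neg
  simp only [neg_zero] at this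
  refine this.congr fun x => ?_
  simp only [Function.comp_apply, id]
  rw [gphi_even]; ring

lemma intA (x : ℝ) : ∫ t in Set.Iic x, t * gphi t = -gphi x := by
  have hderiv : ∀ t ∈ Set.Iic x, HasDerivAt (fun y => -gphi y) (t * gphi t) t := by
    intro t _
    have := (hasDerivAt_gphi t).neg
    refine this.congr_deriv ?_; ring
  have := integral_Iic_of_hasDerivAt_of_tendsto' hderiv
    integrable_id_mul_gphi.integrableOn tendsto_gphi_atBot.neg
  simpa using this

lemma intB (x : ℝ) : ∫ t in Set.Iic x, t ^ 2 * gphi t = gPhi x - x * gphi x := by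
  have hderiv : ∀ t ∈ Set.Iic x, HasDerivAt (fun y => -(y * gphi y))
      (t ^ 2 * gphi t - gphi t) t := by
    intro t _
    have h := ((hasDerivAt_id t).mul (hasDerivAt_gphi t)).neg
    refine h.congr_deriv ?_; simp only [id_eq]; ring
  have hint : IntegrableOn (fun t : ℝ => t ^ 2 * gphi t - gphi t) (Set.Iic x) :=
    (integrable_sq_mul_gphi.sub integrable_gphi).integrableOn
  have htend : Tendsto (fun y : ℝ => -(y * gphi y)) atBot (𝓝 0) := by
    simpa using tendsto_id_mul_gphi_atBot.neg
  have h := integral_Iic_of_hasDerivAt_of_tendsto' hderiv hint htend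
  rw [integral_sub integrable_sq_mul_gphi.integrableOn integrable_gphi.integrableOn] at h
  have : gPhi x = ∫ t in Set.Iic x, gphi t := rfl
  rw [← this] at h
  linarith [h]

lemma gPhi_pos (x : ℝ) : 0 < gPhi x := by
  rw [show gPhi x = ∫ t in Set.Iic x, gphi t from rfl]
  rw [setIntegral_pos_iff_support_of_nonneg_ae
    (Filter.Eventually.of_forall fun t => (gphi_pos t).le) integrable_gphi.integrableOn]
  have : Function.support gphi = Set.univ := by
    ext t; simp [Function.support, (gphi_pos t).ne']
  rw [this, Set.univ_inter]
  simp [Real.volume_Iic]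

lemma continuous_gphi : Continuous gphi := by
  unfold gphi; fun_prop

lemma hasDerivAt_gPhi (x : ℝ) : HasDerivAt gPhi (gphi x) x := by
  have hfun : gPhi = fun u => (∫ t in Set.Iic 0, gphi t) + ∫ t in (0:ℝ)..u, gphi t := by
    funext u
    have h := intervalIntegral.integral_Iic_sub_Iic
      (integrable_gphi.integrableOn (s := Set.Iic 0))
      (integrable_gphi.integrableOn (s := Set.Iic u))
    have : gPhi u = ∫ t in Set.Iic u, gphi t := rfl
    rw [this]
    linarith [h]
  rw [hfun]
  refine HasDerivAt.const_add _ ?_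
  refine intervalIntegral.integral_hasDerivAt_right
    integrable_gphi.intervalIntegrable ?_ continuous_gphi.continuousAt
  exact continuous_gphi.stronglyMeasurableAtFilter _ _

lemma ineq1 (x : ℝ) : 0 ≤ x * gPhi x + gphi x := by
  have h0 : 0 ≤ ∫ t in Set.Iic x, (x - t) * gphi t := by
    refine setIntegral_nonneg measurableSet_Iic fun t ht => ?_
    exact mul_nonneg (by linarith [ht.out]) (gphi_pos t).le
  have hexp : ∫ t in Set.Iic x, (x - t) * gphi t
      = x * gPhi x - ∫ t in Set.Iic x, t * gphi t := by
    rw [show (fun t => (x - t) * gphi t) = fun t => x * gphi t - t * gphi t by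
      funext t; ring]
    rw [integral_sub (integrable_gphi.integrableOn.const_mul x)
      integrable_id_mul_gphi.integrableOn, MeasureTheory.integral_const_mul]
    rfl
  rw [hexp, intA] at h0
  linarith

lemma ineq2 (x : ℝ) : x * gphi x * gPhi x + gphi x ^ 2 ≤ gPhi x ^ 2 := by
  set c := gphi x with hc
  set C := gPhi x with hC
  have hCpos : 0 < C := gPhi_pos x
  set ρ : ℝ := c / C with hρ
  have h0 : 0 ≤ ∫ t in Set.Iic x, (t + ρ) ^ 2 * gphi t := by
    refine setIntegral_nonneg measurableSet_Iic fun t _ => ?_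
    exact mul_nonneg (sq_nonneg _) (gphi_pos t).le
  have hexp : ∫ t in Set.Iic x, (t + ρ) ^ 2 * gphi t
      = (C - x * c) + (2 * ρ) * (-c) + ρ ^ 2 * C := by
    rw [show (fun t => (t + ρ) ^ 2 * gphi t)
        = fun t => t ^ 2 * gphi t + ((2 * ρ) * (t * gphi t) + ρ ^ 2 * gphi t) by
      funext t; ring]
    have hi1 : Integrable (fun t : ℝ => (2 * ρ) * (t * gphi t)) :=
      integrable_id_mul_gphi.const_mul _
    have hi2 : Integrable (fun t : ℝ => ρ ^ 2 * gphi t) := integrable_gphi.const_mul _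
    have hi12 : Integrable (fun t : ℝ => (2 * ρ) * (t * gphi t) + ρ ^ 2 * gphi t) :=
      hi1.add hi2
    rw [integral_add integrable_sq_mul_gphi.integrableOn hi12.integrableOn,
      integral_add hi1.integrableOn hi2.integrableOn,
      MeasureTheory.integral_const_mul, MeasureTheory.integral_const_mul, intA, intB]
    show gPhi x - x * gphi x + (2 * ρ * -gphi x + ρ ^ 2 * gPhi x) = _
    ring
  rw [hexp] at h0
  have hmul : 0 ≤ ((C - x * c) + (2 * ρ) * (-c) + ρ ^ 2 * C) * C :=
    mul_nonneg h0 hCpos.le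
  have he : ((C - x * c) + (2 * ρ) * (-c) + ρ ^ 2 * C) * C
      = C ^ 2 - x * c * C - c ^ 2 := by
    rw [hρ]; field_simp; ring
  rw [he] at hmul
  linarith

lemma ratio_deriv_abs_le (x : ℝ) :
    |(-x * gphi x * gPhi x - gphi x * gphi x) / gPhi x ^ 2| ≤ 1 := by
  have hCpos : 0 < gPhi x := gPhi_pos x
  have h1 := ineq1 x
  have h2 := ineq2 x
  have hc : 0 < gphi x := gphi_pos x
  rw [abs_div, div_le_one (by positivity)]
  rw [abs_of_nonneg (sq_nonneg (gPhi x))]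
  rw [abs_le]
  constructor <;> nlinarith [mul_nonneg h1 hc.le]

lemma hasDerivAt_ratio (x : ℝ) :
    HasDerivAt (fun y => gphi y / gPhi y)
      ((-x * gphi x * gPhi x - gphi x * gphi x) / gPhi x ^ 2) x :=
  (hasDerivAt_gphi x).div (hasDerivAt_gPhi x) (gPhi_pos x).ne'

lemma integral_gphi_total : ∫ t : ℝ, gphi t = 1 := by
  have h : ∫ t : ℝ, Real.exp (-(1/2 : ℝ) * t ^ 2) = Real.sqrt (Real.pi / (1/2)) :=
    integral_gaussian (1/2)
  have hπ : Real.pi / (1/2 : ℝ) = 2 * Real.pi := by ring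
  rw [hπ] at h
  calc ∫ t : ℝ, gphi t
      = (Real.sqrt (2 * Real.pi))⁻¹ * ∫ t : ℝ, Real.exp (-(1/2 : ℝ) * t ^ 2) := by
        rw [← MeasureTheory.integral_const_mul]
        congr 1; funext t; rw [gphi_eq]
    _ = 1 := by
        rw [h]
        exact inv_mul_cancel₀ (by positivity)

lemma gPhi_zero : gPhi 0 = 1/2 := by
  have hsymm : ∫ t in Set.Iic (0:ℝ), gphi t = ∫ t in Set.Ici (0:ℝ), gphi t := by
    have h := integral_comp_neg_Iic (c := (0:ℝ)) (f := gphi)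
    rw [neg_zero] at h
    rw [MeasureTheory.integral_Ici_eq_integral_Ioi, ← h]
    congr 1; funext t; exact (gphi_even t).symm
  have hsplit : (∫ t in Set.Iic (0:ℝ), gphi t) + ∫ t in Set.Ioi (0:ℝ), gphi t
      = ∫ t : ℝ, gphi t := by
    rw [← MeasureTheory.setIntegral_union (Set.Iic_disjoint_Ioi le_rfl) measurableSet_Ioi
      integrable_gphi.integrableOn integrable_gphi.integrableOn,
      Set.Iic_union_Ioi, MeasureTheory.setIntegral_univ]
  rw [integral_gphi_total] at hsplit
  rw [MeasureTheory.integral_Ici_eq_integral_Ioi] at hsymm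
  have : gPhi 0 = ∫ t in Set.Iic (0:ℝ), gphi t := rfl
  rw [this]
  linarith

lemma ratio_zero : gphi 0 / gPhi 0 = Real.sqrt (2 / Real.pi) := by
  have h0 : gphi 0 = (Real.sqrt (2 * Real.pi))⁻¹ := by
    unfold gphi; norm_num
  have hs : Real.sqrt (2 / Real.pi) * Real.sqrt (2 * Real.pi) = 2 := by
    rw [← Real.sqrt_mul (by positivity)]
    rw [show (2 / Real.pi) * (2 * Real.pi) = 4 by field_simp; ring]
    rw [show (4:ℝ) = 2 ^ 2 by norm_num, Real.sqrt_sq (by norm_num)]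
  have hpos : (0:ℝ) < Real.sqrt (2 * Real.pi) := Real.sqrt_pos.2 (by positivity)
  have h2 : Real.sqrt (2 / Real.pi) = 2 / Real.sqrt (2 * Real.pi) := by
    rw [eq_div_iff hpos.ne']; exact hs
  rw [h0, gPhi_zero, h2]
  rw [div_eq_mul_inv, div_eq_mul_inv]
  norm_num
  ring

lemma ratio_lipschitz (x : ℝ) :
    |gphi x / gPhi x - gphi 0 / gPhi 0| ≤ |x| := by
  have h := Convex.norm_image_sub_le_of_norm_hasDerivWithin_le
    (f := fun y => gphi y / gPhi y)
    (f' := fun y => (-y * gphi y * gPhi y - gphi y * gphi y) / gPhi y ^ 2)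
    (s := Set.univ) (C := 1)
    (fun y _ => (hasDerivAt_ratio y).hasDerivWithinAt)
    (fun y _ => by rw [Real.norm_eq_abs]; exact ratio_deriv_abs_le y)
    convex_univ (Set.mem_univ 0) (Set.mem_univ x)
  simpa [Real.norm_eq_abs] using h

/-- The Gaussian hazard-type ratio `φ₁/Φ₁` (density over distribution
function of the standard normal) has derivative bounded by `1` in absolute value, and
consequently `φ₁(x)/Φ₁(x) ≤ √(2/π) + |x|` for all `x`. -/
theorem gaussian_ratio_deriv_bound :
    let φ₁ : ℝ → ℝ := fun x => (Real.sqrt (2 * Real.pi))⁻¹ * Real.exp (-x ^ 2 / 2)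
    let Φ₁ : ℝ → ℝ := fun x => ∫ t in Set.Iic x, φ₁ t
    (∀ x : ℝ, |deriv (fun y => φ₁ y / Φ₁ y) x| ≤ 1) ∧
      ∀ x : ℝ, φ₁ x / Φ₁ x ≤ Real.sqrt (2 / Real.pi) + |x| := by
  intro φ₁ Φ₁
  have hφ : φ₁ = gphi := rfl
  have hΦ : Φ₁ = gPhi := rfl
  rw [hφ, hΦ]
  constructor
  · intro x
    rw [(hasDerivAt_ratio x).deriv]
    exact ratio_deriv_abs_le x
  · intro x
    have h := ratio_lipschitz x
    have h2 := (abs_le.mp h).2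
    rw [ratio_zero] at h2
    linarith
end

section
/- Assume: Z and N are independent standard Gaussian random variables; f : ℝ → ℝ is Borel measurable; f(Z) is not independent of Z; the limit D := lim_{v→0⁺} mmse_z(v)/v exists; and λ is a random variable with a ≤ λ ≤ b almost surely (0 < a ≤ b < ∞) and E[λ] = δ > 1. If P(v) > 0 for every v ∈ (0, 1] (the perfect-reconstruction condition of the state evolution), then D < 1 and δ ≥ 1/(1 − D); that is, the sampling ratio must be at least the information-theoretic threshold 1/(1 − D). -/
open MeasureTheory ProbabilityTheory Filter Real

lemma sen_exp_split (x : ℝ) : rexp (-x ^ 2 / 2) = rexp (-(4⁻¹) * x ^ 2) * rexp (-(4⁻¹) * x ^ 2) := by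
  rw [← Real.exp_add]; ring_nf

lemma sen_sq_exp_le (x : ℝ) : x ^ 2 * rexp (-(4⁻¹) * x ^ 2) ≤ 4 := by
  have h1 := Real.add_one_le_exp (4⁻¹ * x ^ 2)
  have h2 : rexp (-(4⁻¹) * x ^ 2) * rexp (4⁻¹ * x ^ 2) = 1 := by
    rw [← Real.exp_add]; ring_nf; exact Real.exp_zero
  have h3 := Real.exp_pos (4⁻¹ * x ^ 2)
  have h4 := Real.exp_pos (-(4⁻¹) * x ^ 2)
  nlinarith

lemma sen_integrable_sq_gauss : Integrable (fun x : ℝ => x ^ 2 * rexp (-x ^ 2 / 2)) := by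
  have h : Integrable (fun x : ℝ => 4 * rexp (-(4⁻¹) * x ^ 2)) :=
    (integrable_exp_neg_mul_sq (by norm_num : (0:ℝ) < 4⁻¹)).const_mul 4
  refine h.mono' ?_ ?_
  · exact ((continuous_pow 2).mul (by continuity)).aestronglyMeasurable
  · refine Eventually.of_forall fun x => ?_
    rw [Real.norm_eq_abs, abs_of_nonneg (by positivity)]
    calc x ^ 2 * rexp (-x ^ 2 / 2)
        = (x ^ 2 * rexp (-(4⁻¹) * x ^ 2)) * rexp (-(4⁻¹) * x ^ 2) := by
          rw [sen_exp_split]; ring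
      _ ≤ 4 * rexp (-(4⁻¹) * x ^ 2) :=
          mul_le_mul_of_nonneg_right (sen_sq_exp_le x) (Real.exp_pos _).le

lemma sen_integrable_exp_gauss : Integrable (fun x : ℝ => rexp (-x ^ 2 / 2)) := by
  have h := integrable_exp_neg_mul_sq (by norm_num : (0:ℝ) < 2⁻¹)
  convert h using 2 with x
  ring_nf

lemma sen_integrable_lin_gauss : Integrable (fun x : ℝ => x * rexp (-x ^ 2 / 2)) := by
  have h := sen_integrable_sq_gauss.add sen_integrable_exp_gauss
  refine h.mono' ?_ ?_
  · exact (continuous_id.mul (by continuity)).aestronglyMeasurable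
  · refine Eventually.of_forall fun x => ?_
    simp only [Real.norm_eq_abs, abs_mul, Pi.add_apply]
    have h1 : |x| ≤ x ^ 2 + 1 := by nlinarith [abs_nonneg x, sq_abs x]
    have h2 : |rexp (-x ^ 2 / 2)| = rexp (-x ^ 2 / 2) := abs_of_pos (Real.exp_pos _)
    rw [h2]
    nlinarith [Real.exp_pos (-x ^ 2 / 2), sq_abs x, abs_nonneg x]

lemma sen_integral_exp_gauss : ∫ x : ℝ, rexp (-x ^ 2 / 2) = Real.sqrt (2 * π) := by
  have h := integral_gaussian (2⁻¹ : ℝ)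
  have h2 : ∀ x : ℝ, -(2⁻¹:ℝ) * x ^ 2 = -x ^ 2 / 2 := by intro x; ring
  simp_rw [h2] at h
  rw [h]
  rw [show π / 2⁻¹ = 2 * π by ring]

lemma sen_integral_lin_gauss : ∫ x : ℝ, x * rexp (-x ^ 2 / 2) = 0 := by
  have hderiv : ∀ x : ℝ, HasDerivAt (fun y : ℝ => -rexp (-y ^ 2 / 2)) (x * rexp (-x ^ 2 / 2)) x := by
    intro x
    have h1 : HasDerivAt (fun y : ℝ => -y ^ 2 / 2) (-x) x := by
      have := ((hasDerivAt_pow 2 x).neg).div_const 2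
      refine this.congr_deriv ?_
      simp; ring
    have h2 := h1.exp.neg
    refine h2.congr_deriv ?_
    ring
  exact integral_eq_zero_of_hasDerivAt_of_integrable hderiv sen_integrable_lin_gauss
    sen_integrable_exp_gauss.neg

lemma sen_integral_sq_exp_gauss : ∫ x : ℝ, x ^ 2 * rexp (-x ^ 2 / 2) = Real.sqrt (2 * π) := by
  have hderiv : ∀ x : ℝ, HasDerivAt (fun y : ℝ => -y * rexp (-y ^ 2 / 2))
      ((x ^ 2 - 1) * rexp (-x ^ 2 / 2)) x := by
    intro x
    have h1 : HasDerivAt (fun y : ℝ => -y ^ 2 / 2) (-x) x := by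
      have := ((hasDerivAt_pow 2 x).neg).div_const 2
      refine this.congr_deriv ?_
      simp; ring
    have h2 := (hasDerivAt_id x).neg.mul h1.exp
    simp only [Pi.neg_apply, id_eq] at h2
    refine h2.congr_deriv ?_
    ring
  have hint : Integrable (fun x : ℝ => (x ^ 2 - 1) * rexp (-x ^ 2 / 2)) := by
    have h := sen_integrable_sq_gauss.sub sen_integrable_exp_gauss
    refine h.congr (Eventually.of_forall fun x => ?_)
    simp only [Pi.sub_apply]
    ring
  have hF : Integrable (fun x : ℝ => -x * rexp (-x ^ 2 / 2)) := by
    have := sen_integrable_lin_gauss.neg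
    refine this.congr (Eventually.of_forall fun x => ?_)
    simp only [Pi.neg_apply]
    ring
  have h0 := integral_eq_zero_of_hasDerivAt_of_integrable hderiv hint hF
  have hsplit : ∫ x : ℝ, (x ^ 2 - 1) * rexp (-x ^ 2 / 2)
      = (∫ x : ℝ, x ^ 2 * rexp (-x ^ 2 / 2)) - ∫ x : ℝ, rexp (-x ^ 2 / 2) := by
    rw [← integral_sub sen_integrable_sq_gauss sen_integrable_exp_gauss]
    congr 1 with x
    ring
  rw [hsplit] at h0
  rw [sen_integral_exp_gauss] at h0
  linarith
open scoped NNReal ENNReal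

lemma sen_pdf01 (x : ℝ) : gaussianPDFReal 0 1 x = (Real.sqrt (2 * π))⁻¹ * rexp (-x ^ 2 / 2) := by
  simp [gaussianPDFReal]

lemma sen_gauss_integral_eq (h : ℝ → ℝ) :
    ∫ x, h x ∂(gaussianReal 0 1) = ∫ x, gaussianPDFReal 0 1 x * h x := by
  rw [gaussianReal_of_var_ne_zero _ one_ne_zero]
  have hd : gaussianPDF 0 1 = fun x => ((Real.toNNReal (gaussianPDFReal 0 1 x) : ℝ≥0) : ℝ≥0∞) := rfl
  rw [hd, integral_withDensity_eq_integral_smul (measurable_gaussianPDFReal 0 1).real_toNNReal h]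
  congr 1 with x
  rw [NNReal.smul_def, smul_eq_mul, Real.coe_toNNReal _ (gaussianPDFReal_nonneg 0 1 x)]

lemma sen_gauss_integrable (h : ℝ → ℝ) (hmeas : Measurable h)
    (hint : Integrable (fun x => gaussianPDFReal 0 1 x * h x)) :
    Integrable h (gaussianReal 0 1) := by
  rw [gaussianReal_of_var_ne_zero _ one_ne_zero]
  have hd : gaussianPDF 0 1 = fun x => ((Real.toNNReal (gaussianPDFReal 0 1 x) : ℝ≥0) : ℝ≥0∞) := rfl
  rw [hd]
  rw [integrable_withDensity_iff_integrable_smul (measurable_gaussianPDFReal 0 1).real_toNNReal]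
  refine hint.congr (Eventually.of_forall fun x => ?_)
  simp only [NNReal.smul_def, smul_eq_mul, Real.coe_toNNReal _ (gaussianPDFReal_nonneg 0 1 x)]

lemma sen_sqrt2pi_pos : (0:ℝ) < Real.sqrt (2 * π) := Real.sqrt_pos.mpr (by positivity)

lemma sen_gauss_mean : ∫ x, x ∂(gaussianReal 0 1) = 0 := by
  rw [sen_gauss_integral_eq]
  have : ∀ x : ℝ, gaussianPDFReal 0 1 x * x = (Real.sqrt (2 * π))⁻¹ * (x * rexp (-x ^ 2 / 2)) := by
    intro x; rw [sen_pdf01]; ring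
  simp_rw [this, integral_const_mul, sen_integral_lin_gauss, mul_zero]

lemma sen_gauss_sq : ∫ x, x ^ 2 ∂(gaussianReal 0 1) = 1 := by
  rw [sen_gauss_integral_eq]
  have : ∀ x : ℝ, gaussianPDFReal 0 1 x * x ^ 2
      = (Real.sqrt (2 * π))⁻¹ * (x ^ 2 * rexp (-x ^ 2 / 2)) := by
    intro x; rw [sen_pdf01]; ring
  simp_rw [this, integral_const_mul, sen_integral_sq_exp_gauss]
  exact inv_mul_cancel₀ sen_sqrt2pi_pos.ne'

lemma sen_gauss_integrable_sq : Integrable (fun x : ℝ => x ^ 2) (gaussianReal 0 1) := by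
  refine sen_gauss_integrable _ (measurable_id.pow_const 2) ?_
  have : ∀ x : ℝ, gaussianPDFReal 0 1 x * x ^ 2
      = (Real.sqrt (2 * π))⁻¹ * (x ^ 2 * rexp (-x ^ 2 / 2)) := by
    intro x; rw [sen_pdf01]; ring
  simp_rw [this]
  exact sen_integrable_sq_gauss.const_mul _

lemma sen_gauss_memLp : MemLp (id : ℝ → ℝ) 2 (gaussianReal 0 1) := by
  rw [memLp_two_iff_integrable_sq aestronglyMeasurable_id]
  exact sen_gauss_integrable_sq
open scoped NNReal ENNReal

lemma sen_lp_sq_norm {α : Type*} {m0 : MeasurableSpace α} {μ : Measure α} (h : Lp ℝ 2 μ) :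
    ∫ x, (h x) ^ 2 ∂μ = ‖h‖ ^ 2 := by
  rw [← real_inner_self_eq_norm_sq]
  rw [L2.inner_def]
  congr 1 with x
  simp [RCLike.inner_apply, sq]

lemma sen_condexp_min {α : Type*} {m m0 : MeasurableSpace α} (hm : m ≤ m0) {μ : Measure α}
    [IsFiniteMeasure μ] {Z W : α → ℝ} (hZ : MemLp Z 2 μ) (hW : MemLp W 2 μ)
    (hWm : AEStronglyMeasurable[m] W μ) :
    ∫ ω, (Z ω - (μ[Z|m]) ω) ^ 2 ∂μ ≤ ∫ ω, (Z ω - W ω) ^ 2 ∂μ := by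
  haveI : Fact (m ≤ m0) := ⟨hm⟩
  set u : Lp ℝ 2 μ := hZ.toLp Z with hu
  set w : Lp ℝ 2 μ := hW.toLp W with hw
  set K : Submodule ℝ (Lp ℝ 2 μ) := lpMeas ℝ ℝ m 2 μ with hK
  set p : Lp ℝ 2 μ := (condExpL2 ℝ ℝ hm u : Lp ℝ 2 μ) with hp
  have hproj : p = (K.orthogonalProjectionOnto u : Lp ℝ 2 μ) := rfl
  -- identification of condexp with condexpL2
  have hid : (p : α → ℝ) =ᵐ[μ] μ[Z|m] := by
    refine ae_eq_condExp_of_forall_setIntegral_eq hm (hZ.integrable one_le_two) ?_ ?_ ?_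
    · intro s _ _
      exact ((Lp.memLp p).integrable one_le_two).integrableOn
    · intro s hs hμs
      have h1 := integral_condExpL2_eq (𝕜 := ℝ) hm u hs hμs.ne
      rw [h1]
      exact setIntegral_congr_ae (hm s hs) ((hZ.coeFn_toLp).mono fun x hx _ => hx)
    · exact aestronglyMeasurable_condExpL2 hm u
  have hwK : w ∈ K := by
    rw [hK, mem_lpMeas_iff_aestronglyMeasurable]
    exact hWm.congr (hW.coeFn_toLp).symm
  -- ∫ (Z - μ[Z|m])² = ‖u - p‖²
  have e1 : ∫ ω, (Z ω - (μ[Z|m]) ω) ^ 2 ∂μ = ‖u - p‖ ^ 2 := by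
    rw [← sen_lp_sq_norm (u - p)]
    refine integral_congr_ae ?_
    filter_upwards [hZ.coeFn_toLp, hid, Lp.coeFn_sub u p] with ω h1 h2 h3
    rw [h3]
    simp only [Pi.sub_apply, hu, h1, h2]
  have e2 : ∫ ω, (Z ω - W ω) ^ 2 ∂μ = ‖u - w‖ ^ 2 := by
    rw [← sen_lp_sq_norm (u - w)]
    refine integral_congr_ae ?_
    filter_upwards [hZ.coeFn_toLp, hW.coeFn_toLp, Lp.coeFn_sub u w] with ω h1 h2 h3
    rw [h3]
    simp only [Pi.sub_apply, hu, hw, h1, h2]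
  rw [e1, e2]
  -- minimality of the orthogonal projection
  have horth : u - p ∈ Kᗮ := by
    rw [hproj]
    exact K.sub_starProjection_mem_orthogonal u
  have hpK : p ∈ K := by rw [hproj]; exact (K.orthogonalProjectionOnto u).2
  have hinner : inner ℝ (u - p) (p - w) = (0:ℝ) :=
    (Submodule.mem_orthogonal' K _).mp horth _ (K.sub_mem hpK hwK)
  have hpyth : ‖u - w‖ ^ 2 = ‖u - p‖ ^ 2 + ‖p - w‖ ^ 2 := by
    have : u - w = (u - p) + (p - w) := by abel
    rw [this, norm_add_sq_real, hinner]
    ring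
  nlinarith [sq_nonneg ‖p - w‖]

section
variable {Ω : Type*} [MeasurableSpace Ω] {μ : Measure Ω} [IsProbabilityMeasure μ]

lemma sen_memLp2 {Z : Ω → ℝ} (hZ : Measurable Z) (hZg : μ.map Z = gaussianReal 0 1) :
    MemLp Z 2 μ := by
  have h := sen_gauss_memLp
  rw [← hZg] at h
  exact (memLp_map_measure_iff aestronglyMeasurable_id hZ.aemeasurable).mp h

lemma sen_sq_moment {Z : Ω → ℝ} (hZ : Measurable Z) (hZg : μ.map Z = gaussianReal 0 1) :
    ∫ ω, Z ω ^ 2 ∂μ = 1 := by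
  have h := integral_map (φ := Z) (μ := μ) hZ.aemeasurable
    ((measurable_id.pow_const 2).aestronglyMeasurable (μ := μ.map Z))
  simp only [id_eq] at h
  rw [hZg, sen_gauss_sq] at h
  exact h.symm

lemma sen_mean_zero {Z : Ω → ℝ} (hZ : Measurable Z) (hZg : μ.map Z = gaussianReal 0 1) :
    ∫ ω, Z ω ∂μ = 0 := by
  have h := integral_map (φ := Z) (μ := μ) hZ.aemeasurable
    (measurable_id.aestronglyMeasurable (μ := μ.map Z))
  simp only [id_eq] at h
  rw [hZg, sen_gauss_mean] at h
  exact h.symm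

lemma sen_mmse_le (Z N : Ω → ℝ) (f : ℝ → ℝ) (hZ : Measurable Z) (hN : Measurable N)
    (hf : Measurable f) (hZg : μ.map Z = gaussianReal 0 1) (hNg : μ.map N = gaussianReal 0 1)
    (hZN : IndepFun Z N μ) {v : ℝ} (hv : 0 < v) (hv1 : v ≤ 1) :
    ∫ ω, (Z ω - (μ[Z | MeasurableSpace.comap
        (fun ω => (Real.sqrt (1 / v - 1) * Z ω + N ω, f (Z ω))) inferInstance]) ω) ^ 2 ∂μ ≤ v := by
  set s : ℝ := Real.sqrt (1 / v - 1) with hs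
  have hs2 : s ^ 2 = 1 / v - 1 := Real.sq_sqrt (by
    have : 1 ≤ 1 / v := (le_div_iff₀ hv).mpr (by linarith)
    linarith)
  set φv : Ω → ℝ × ℝ := fun ω => (s * Z ω + N ω, f (Z ω)) with hφv
  have hφvm : Measurable φv := ((hZ.const_mul s).add hN).prodMk (hf.comp hZ)
  have hm' : MeasurableSpace.comap φv inferInstance ≤ ‹MeasurableSpace Ω› := hφvm.comap_le
  set W : Ω → ℝ := fun ω => s * v * (s * Z ω + N ω) with hW
  have hWm : AEStronglyMeasurable[MeasurableSpace.comap φv inferInstance] W μ := by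
    refine StronglyMeasurable.aestronglyMeasurable ?_
    refine Measurable.stronglyMeasurable ?_
    have h1 : Measurable[MeasurableSpace.comap φv inferInstance] φv :=
      Measurable.of_comap_le le_rfl
    exact (measurable_fst.const_mul (s * v)).comp h1
  have hZ2 : MemLp Z 2 μ := sen_memLp2 hZ hZg
  have hN2 : MemLp N 2 μ := sen_memLp2 hN hNg
  have hW2 : MemLp W 2 μ := ((hZ2.const_mul s).add hN2).const_mul (s * v)
  have hmin := sen_condexp_min hm' hZ2 hW2 hWm
  refine le_trans hmin ?_
  -- compute ∫ (Z - W)² = v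
  have hsv : s ^ 2 * v = 1 - v := by
    rw [hs2]; field_simp
  have hptw : ∀ ω, (Z ω - W ω) ^ 2
      = v ^ 2 * Z ω ^ 2 + s ^ 2 * v ^ 2 * N ω ^ 2 - 2 * s * v ^ 2 * (Z ω * N ω) := by
    intro ω
    rw [hW]
    linear_combination (-(((1 - s ^ 2 * v) + v) * Z ω ^ 2 - 2 * s * v * (Z ω * N ω))) * hsv
  have hZsqI : Integrable (fun ω => Z ω ^ 2) μ := hZ2.integrable_sq
  have hNsqI : Integrable (fun ω => N ω ^ 2) μ := hN2.integrable_sq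
  have hZNI : Integrable (fun ω => Z ω * N ω) μ := by
    have hpqr : (1 : ℝ≥0∞) / 1 = 1 / 2 + 1 / 2 := by
      rw [div_one]; exact (ENNReal.add_halves 1).symm
    have h : MemLp (Z • N) 1 μ := hN2.smul (r := 1) hZ2
    exact h.integrable le_rfl
  have hZNmul : ∫ ω, Z ω * N ω ∂μ = 0 := by
    have h : ∫ ω, Z ω * N ω ∂μ = (∫ ω, Z ω ∂μ) * ∫ ω, N ω ∂μ :=
      hZN.integral_mul_eq_mul_integral hZ.aestronglyMeasurable hN.aestronglyMeasurable
    rw [h, sen_mean_zero hZ hZg, zero_mul]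
  have hcalc : ∫ ω, (Z ω - W ω) ^ 2 ∂μ = v := by
    rw [integral_congr_ae (Eventually.of_forall hptw)]
    have hI1 : Integrable (fun ω => v ^ 2 * Z ω ^ 2 + s ^ 2 * v ^ 2 * N ω ^ 2) μ :=
      (hZsqI.const_mul _).add (hNsqI.const_mul _)
    have hI2 : Integrable (fun ω => 2 * s * v ^ 2 * (Z ω * N ω)) μ := hZNI.const_mul _
    rw [integral_sub hI1 hI2]
    rw [integral_add (hZsqI.const_mul _) (hNsqI.const_mul _)]
    rw [integral_const_mul, integral_const_mul, integral_const_mul]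
    rw [sen_sq_moment hZ hZg, sen_sq_moment hN hNg, hZNmul]
    linear_combination v * hsv
  rw [hcalc]
end
/-- Necessity of the information-theoretic threshold.  Under the standing
assumptions, if the perfect-reconstruction condition `P(v) > 0` for all `v ∈ (0,1]` of the
state evolution holds, then the conditional MMSE dimension satisfies `D < 1` and the
sampling ratio satisfies `δ ≥ 1/(1 − D)`. -/
theorem state_evolution_necessity {Ω : Type*} [MeasurableSpace Ω] {μ : Measure Ω}
    [IsProbabilityMeasure μ]
    (Z N : Ω → ℝ) (f : ℝ → ℝ)
    (hZ : Measurable Z) (hN : Measurable N) (hf : Measurable f)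
    (hZg : μ.map Z = gaussianReal 0 1) (hNg : μ.map N = gaussianReal 0 1)
    (hZN : IndepFun Z N μ)
    (lam : Ω → ℝ) (hlam : Measurable lam)
    (a b δ D : ℝ) (ha : 0 < a) (hab : a ≤ b)
    (hbound : ∀ᵐ ω ∂μ, lam ω ∈ Set.Icc a b)
    (hmean : ∫ ω, lam ω ∂μ = δ) (hδ : 1 < δ) :
    let mmse : ℝ → ℝ := fun v =>
      ∫ ω, (Z ω - (μ[Z | MeasurableSpace.comap
          (fun ω => (Real.sqrt (1 / v - 1) * Z ω + N ω, f (Z ω))) inferInstance]) ω) ^ 2 ∂μ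
    let φ : ℝ → ℝ := fun v => mmse v * v / (v - mmse v)
    let g : ℝ → ℝ := fun v => 1 - δ * (1 - mmse v / v)
    let P : ℝ → ℝ := fun v => (∫ ω, φ v / (φ v + lam ω) ∂μ) - g v
    (¬ IndepFun Z (fun ω => f (Z ω)) μ) →
    Tendsto (fun v => mmse v / v) (nhdsWithin 0 (Set.Ioi 0)) (nhds D) →
    (∀ v ∈ Set.Ioc (0 : ℝ) 1, 0 < P v) →
    D < 1 ∧ 1 / (1 - D) ≤ δ := by
  intro mmse φ g P hindep hlim hP
  have hδ0 : (0:ℝ) < δ := lt_trans one_pos hδ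
  have hmnonneg : ∀ v : ℝ, 0 ≤ mmse v := fun v => integral_nonneg fun ω => sq_nonneg _
  have hmle : ∀ v ∈ Set.Ioc (0:ℝ) 1, mmse v ≤ v := fun v hv =>
    sen_mmse_le Z N f hZ hN hf hZg hNg hZN hv.1 hv.2
  have key : ∀ v ∈ Set.Ioc (0:ℝ) 1, a / δ < mmse v + a * (1 - mmse v / v) := by
    intro v hv
    obtain ⟨hv0, hv1⟩ := hv
    have hPv : 0 < (∫ ω, φ v / (φ v + lam ω) ∂μ) - (1 - δ * (1 - mmse v / v)) := hP v ⟨hv0, hv1⟩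
    have hm0 : 0 ≤ mmse v := hmnonneg v
    have hmv : mmse v ≤ v := hmle v ⟨hv0, hv1⟩
    rcases eq_or_lt_of_le hmv with heq | hlt
    · -- mmse v = v : contradiction with hPv
      exfalso
      have hφ0 : φ v = 0 := by
        show mmse v * v / (v - mmse v) = 0
        rw [heq, sub_self, div_zero]
      have hint0 : (∫ ω, φ v / (φ v + lam ω) ∂μ) = 0 := by
        rw [hφ0]; simp
      rw [hint0, heq, div_self hv0.ne'] at hPv
      norm_num at hPv
    · have hsub : 0 < v - mmse v := sub_pos.mpr hlt
      have hqval : φ v = mmse v * v / (v - mmse v) := rfl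
      have hq0 : 0 ≤ φ v := by rw [hqval]; positivity
      have hqa : 0 < φ v + a := by linarith
      have hbd : ∀ᵐ ω ∂μ, φ v / (φ v + lam ω) ≤ φ v / (φ v + a) := by
        filter_upwards [hbound] with ω hω
        gcongr
        exact hω.1
      have hintble : Integrable (fun ω => φ v / (φ v + lam ω)) μ := by
        have hmeas : AEStronglyMeasurable (fun ω => φ v / (φ v + lam ω)) μ :=
          (measurable_const.div (measurable_const.add hlam)).aestronglyMeasurable
        refine Integrable.mono' (integrable_const (φ v / (φ v + a))) hmeas ?_
        filter_upwards [hbound] with ω hω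
        have hden : 0 < φ v + lam ω := by have := hω.1; linarith
        rw [Real.norm_eq_abs, abs_of_nonneg (div_nonneg hq0 hden.le)]
        gcongr
        exact hω.1
      have hle : (∫ ω, φ v / (φ v + lam ω) ∂μ) ≤ φ v / (φ v + a) := by
        have h := integral_mono_ae hintble (integrable_const _) hbd
        simpa using h
      have hgv : 1 - δ * (1 - mmse v / v) < φ v / (φ v + a) := by linarith
      rw [hqval] at hgv
      set m := mmse v with hm
      set q : ℝ := m * v / (v - m) with hqdef
      rw [lt_div_iff₀ hqa] at hgv
      have h2 : q * (1 - m / v) = m := by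
        rw [hqdef]
        field_simp
      have h1 : a < δ * (1 - m / v) * (q + a) := by nlinarith [hgv]
      have h3 : δ * (1 - m / v) * (q + a) = δ * (m + a * (1 - m / v)) := by
        linear_combination δ * h2
      rw [div_lt_iff₀ hδ0]
      rw [h3] at h1
      linarith
  have hm0' : Tendsto mmse (nhdsWithin (0:ℝ) (Set.Ioi 0)) (nhds 0) := by
    have hev : ∀ᶠ v in nhdsWithin (0:ℝ) (Set.Ioi 0), mmse v ≤ v := by
      filter_upwards [Ioc_mem_nhdsGT (zero_lt_one : (0:ℝ) < 1)] with v hv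
      exact hmle v hv
    have hev0 : ∀ᶠ v in nhdsWithin (0:ℝ) (Set.Ioi 0), 0 ≤ mmse v :=
      Eventually.of_forall fun v => hmnonneg v
    exact tendsto_of_tendsto_of_tendsto_of_le_of_le' tendsto_const_nhds
      (tendsto_id.mono_left nhdsWithin_le_nhds) hev0 hev
  have hcomb : Tendsto (fun v => mmse v + a * (1 - mmse v / v)) (nhdsWithin (0:ℝ) (Set.Ioi 0))
      (nhds (0 + a * (1 - D))) :=
    hm0'.add ((tendsto_const_nhds.sub hlim).const_mul a)
  have hfin : a / δ ≤ 0 + a * (1 - D) := by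
    refine ge_of_tendsto hcomb ?_
    filter_upwards [Ioc_mem_nhdsGT (zero_lt_one : (0:ℝ) < 1)] with v hv
    exact (key v hv).le
  rw [zero_add] at hfin
  have h1D : 1 / δ ≤ 1 - D := by
    rw [div_eq_mul_inv] at hfin
    rw [one_div]
    have h := mul_le_mul_of_nonneg_left hfin (inv_nonneg.mpr ha.le)
    rw [← mul_assoc, ← mul_assoc, inv_mul_cancel₀ ha.ne', one_mul, one_mul] at h
    exact h
  have hδinv : (0:ℝ) < 1 / δ := by positivity
  have hDlt : D < 1 := by linarith
  refine ⟨hDlt, ?_⟩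
  have h1D0 : 0 < 1 - D := sub_pos.mpr hDlt
  rw [div_le_iff₀ h1D0]
  have h := mul_le_mul_of_nonneg_left h1D hδ0.le
  rw [mul_one_div, div_self hδ0.ne'] at h
  linarith
end
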